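/- Let F ∈ ℂ^{n×n}, G ∈ ℂ^{n×m}, H ∈ ℂ^{ℓ×n}, K ∈ ℂ^{ℓ×m} with ℓ ≤ m satisfy F + F† + GG† = 0, H† + GK† = 0, and suppose K̂ ∈ ℂ^{(m-ℓ)×m} makes K̃ = [K; K̂] unitary. Define Ĥ = -K̂ G†. Then the augmented matrices H̃ = [H; Ĥ] and K̃ satisfy H̃† + G K̃† = 0, so the augmented square system (F, G, H̃, K̃) satisfies all physical realizability conditions F + F† + GG† = 0, H̃† + G K̃† = 0, K̃ K̃† = K̃† K̃ = I. -/

import Mathlib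

open Matrix

theorem stmt17 (n m l : ℕ) (hlm : l ≤ m)
    (F : Matrix (Fin n) (Fin n) ℂ) (G : Matrix (Fin n) (Fin m) ℂ)
    (H : Matrix (Fin l) (Fin n) ℂ) (K : Matrix (Fin l) (Fin m) ℂ)
    (hpr1 : F + Fᴴ + G * Gᴴ = 0) (hpr2 : Hᴴ + G * Kᴴ = 0)
    (Khat : Matrix (Fin (m - l)) (Fin m) ℂ)
    (hKt1 : Matrix.fromRows K Khat * (Matrix.fromRows K Khat)ᴴ = 1)
    (hKt2 : (Matrix.fromRows K Khat)ᴴ * Matrix.fromRows K Khat = 1)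
    (Hhat : Matrix (Fin (m - l)) (Fin n) ℂ) (hHhat : Hhat = -(Khat * Gᴴ)) :
    (Matrix.fromRows H Hhat)ᴴ + G * (Matrix.fromRows K Khat)ᴴ = 0 ∧
    F + Fᴴ + G * Gᴴ = 0 ∧
    Matrix.fromRows K Khat * (Matrix.fromRows K Khat)ᴴ = 1 ∧
    (Matrix.fromRows K Khat)ᴴ * Matrix.fromRows K Khat = 1 := by
  refine ⟨?_, hpr1, hKt1, hKt2⟩
  rw [conjTranspose_fromRows_eq_fromCols_conjTranspose, conjTranspose_fromRows_eq_fromCols_conjTranspose, mul_fromCols, hHhat]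
  ext i j
  cases j with
  | inl j => simpa using congrFun (congrFun hpr2 i) j
  | inr j => simp [Matrix.add_apply, Matrix.mul_apply, mul_comm]
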